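/- If f is a symmetric unimodal probability density with mode at zero and σ² > 0, then the normal means posterior mean operator S(y) = E[b | y] is an odd function of y that satisfies S(y) ≤ y for y > 0. -/

import Mathlib

open MeasureTheory Real

/-- Gaussian density with mean `μ` and variance `v`. -/
noncomputable def gauss (μ v x : ℝ) : ℝ :=
  (Real.sqrt (2 * Real.pi * v))⁻¹ * Real.exp (-(x - μ)^2 / (2 * v))

/-- Normal means posterior mean operator for prior density `f` and noise
variance `σ2`. -/
noncomputable def postMean (f : ℝ → ℝ) (σ2 y : ℝ) : ℝ :=
  (∫ b : ℝ, b * (gauss b σ2 y * f b)) / (∫ b : ℝ, gauss b σ2 y * f b)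

lemma aux_texp (t : ℝ) (ht : 0 ≤ t) : t ≤ Real.exp (t^2) := by
  rcases le_total t 1 with h | h
  · exact h.trans (Real.one_le_exp (by positivity))
  · calc t ≤ Real.exp t := (Real.add_one_le_exp t).trans' (by linarith)
      _ ≤ Real.exp (t^2) := Real.exp_le_exp.mpr (by nlinarith)

lemma aux_xexp (σ2 : ℝ) (hσ2 : 0 < σ2) (x : ℝ) :
    |x| * Real.exp (-x^2/(2*σ2)) ≤ Real.sqrt (2*σ2) := by
  set s := Real.sqrt (2*σ2) with hs
  have hspos : 0 < s := Real.sqrt_pos.mpr (by linarith)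
  have hs2 : s^2 = 2*σ2 := Real.sq_sqrt (by linarith)
  have h1 : |x| ≤ s * Real.exp (x^2/(2*σ2)) := by
    have := aux_texp (|x| / s) (by positivity)
    have h2 : (|x|/s)^2 = x^2/(2*σ2) := by
      rw [div_pow, hs2, sq_abs]
    rw [h2] at this
    calc |x| = s * (|x|/s) := by field_simp
      _ ≤ s * Real.exp (x^2/(2*σ2)) := by
          exact mul_le_mul_of_nonneg_left this hspos.le
  calc |x| * Real.exp (-x^2/(2*σ2))
      ≤ (s * Real.exp (x^2/(2*σ2))) * Real.exp (-x^2/(2*σ2)) := by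
        exact mul_le_mul_of_nonneg_right h1 (Real.exp_pos _).le
    _ = s * Real.exp (x^2/(2*σ2) + -x^2/(2*σ2)) := by rw [mul_assoc, ← Real.exp_add]
    _ = s := by rw [show x^2/(2*σ2) + -x^2/(2*σ2) = 0 by ring, Real.exp_zero, mul_one]

lemma gauss_pos {σ2 : ℝ} (hσ2 : 0 < σ2) (μ x : ℝ) : 0 < gauss μ σ2 x := by
  unfold gauss
  have : 0 < Real.sqrt (2 * Real.pi * σ2) :=
    Real.sqrt_pos.mpr (by positivity)
  positivity

lemma gauss_le {σ2 : ℝ} (hσ2 : 0 < σ2) (μ x : ℝ) :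
    gauss μ σ2 x ≤ (Real.sqrt (2 * Real.pi * σ2))⁻¹ := by
  unfold gauss
  have h : Real.exp (-(x - μ)^2 / (2 * σ2)) ≤ 1 := by
    rw [Real.exp_le_one_iff]
    have : 0 ≤ (x - μ)^2 := sq_nonneg _
    apply div_nonpos_of_nonpos_of_nonneg <;> nlinarith
  have hc : 0 < (Real.sqrt (2 * Real.pi * σ2))⁻¹ := by
    have : 0 < Real.sqrt (2 * Real.pi * σ2) := Real.sqrt_pos.mpr (by positivity)
    positivity
  calc (Real.sqrt (2 * Real.pi * σ2))⁻¹ * Real.exp (-(x - μ)^2 / (2 * σ2))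
      ≤ (Real.sqrt (2 * Real.pi * σ2))⁻¹ * 1 := by
        exact mul_le_mul_of_nonneg_left h hc.le
    _ = _ := mul_one _

lemma gauss_cont (σ2 y : ℝ) : Continuous (fun b => gauss b σ2 y) := by
  unfold gauss
  fun_prop

lemma bgauss_bound {σ2 : ℝ} (hσ2 : 0 < σ2) (y b : ℝ) :
    |b * gauss b σ2 y| ≤ (Real.sqrt (2 * Real.pi * σ2))⁻¹ * (|y| + Real.sqrt (2*σ2)) := by
  set c := (Real.sqrt (2 * Real.pi * σ2))⁻¹ with hc
  have hcpos : 0 < c := by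
    have : 0 < Real.sqrt (2 * Real.pi * σ2) := Real.sqrt_pos.mpr (by positivity)
    positivity
  have hE : Real.exp (-(y - b)^2 / (2 * σ2)) ≤ 1 := by
    rw [Real.exp_le_one_iff]
    have : 0 ≤ (y - b)^2 := sq_nonneg _
    apply div_nonpos_of_nonpos_of_nonneg <;> nlinarith
  have hEpos : 0 < Real.exp (-(y - b)^2 / (2 * σ2)) := Real.exp_pos _
  have hxe : |b - y| * Real.exp (-(y - b)^2 / (2 * σ2)) ≤ Real.sqrt (2*σ2) := by
    have := aux_xexp σ2 hσ2 (b - y)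
    have h2 : (b - y)^2 = (y - b)^2 := by ring
    rw [show -(b-y)^2/(2*σ2) = -(y-b)^2/(2*σ2) by rw [h2]] at this
    exact this
  have hb : |b| ≤ |y| + |b - y| := by
    have := abs_sub_abs_le_abs_sub b y
    linarith [abs_sub_abs_le_abs_sub b y]
  calc |b * gauss b σ2 y| = |b| * (c * Real.exp (-(y - b)^2 / (2 * σ2))) := by
        unfold gauss
        rw [abs_mul]
        congr 1
        rw [abs_of_pos (by positivity)]
    _ ≤ (|y| + |b - y|) * (c * Real.exp (-(y - b)^2 / (2 * σ2))) := by
        exact mul_le_mul_of_nonneg_right hb (by positivity)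
    _ = c * (|y| * Real.exp (-(y - b)^2 / (2 * σ2)))
        + c * (|b - y| * Real.exp (-(y - b)^2 / (2 * σ2))) := by ring
    _ ≤ c * (|y| * 1) + c * Real.sqrt (2*σ2) := by
        gcongr
    _ = c * (|y| + Real.sqrt (2*σ2)) := by ring

/-- If `f` is a symmetric unimodal probability density with mode
at zero and `σ² > 0`, then the normal means posterior mean operator
`S(y) = E[b | y]` is an odd function of `y` that satisfies `S(y) ≤ y` for
`y > 0`. -/
theorem stmt_3 (σ2 : ℝ) (hσ2 : 0 < σ2) (f : ℝ → ℝ)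
    (hf_nonneg : ∀ b, 0 ≤ f b) (hf_int : ∫ b : ℝ, f b = 1)
    (hf_symm : ∀ b, f (-b) = f b)
    (hf_unimodal : AntitoneOn f (Set.Ici 0)) :
    (∀ y : ℝ, postMean f σ2 (-y) = -postMean f σ2 y) ∧
    (∀ y : ℝ, 0 < y → postMean f σ2 y ≤ y) := by
  have hfi : Integrable f := by
    by_contra h
    rw [integral_undef h] at hf_int
    norm_num at hf_int
  -- integrability of the denominator integrand
  have hD_int : ∀ y, Integrable (fun b => gauss b σ2 y * f b) := by
    intro y
    exact hfi.bdd_mul (c := (Real.sqrt (2 * Real.pi * σ2))⁻¹) (gauss_cont σ2 y).aestronglyMeasurable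
      (ae_of_all _ fun b => by
        rw [Real.norm_eq_abs, abs_of_pos (gauss_pos hσ2 b y)]
        exact gauss_le hσ2 b y)
  -- integrability of the numerator integrand
  have hN_int : ∀ y, Integrable (fun b => b * (gauss b σ2 y * f b)) := by
    intro y
    have : Integrable (fun b => (b * gauss b σ2 y) * f b) :=
      hfi.bdd_mul (c := (Real.sqrt (2 * Real.pi * σ2))⁻¹ * (|y| + Real.sqrt (2*σ2))) ((continuous_id.mul (gauss_cont σ2 y)).aestronglyMeasurable)
        (ae_of_all _ fun b => by
          rw [Real.norm_eq_abs]
          exact bgauss_bound hσ2 y b)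
    simpa [mul_assoc] using this
  -- positivity of the denominator
  have hD_pos : ∀ y, 0 < ∫ b : ℝ, gauss b σ2 y * f b := by
    intro y
    have hnn : 0 ≤ fun b => gauss b σ2 y * f b :=
      fun b => mul_nonneg (gauss_pos hσ2 b y).le (hf_nonneg b)
    rcases (integral_nonneg hnn).lt_or_eq with h | h
    · exact h
    · exfalso
      have hz : (fun b => gauss b σ2 y * f b) =ᵐ[volume] 0 :=
        (integral_eq_zero_iff_of_nonneg hnn (hD_int y)).mp h.symm
      have hfz : f =ᵐ[volume] 0 := by
        filter_upwards [hz] with b hb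
        have hg := gauss_pos hσ2 b y
        simpa [hg.ne', mul_eq_zero] using hb
      rw [integral_congr_ae hfz] at hf_int
      simp at hf_int
  constructor
  · -- oddness
    intro y
    unfold postMean
    have hgauss_neg : ∀ b : ℝ, gauss (-b) σ2 (-y) = gauss b σ2 y := by
      intro b; unfold gauss; ring_nf
    have hN : ∫ b : ℝ, b * (gauss b σ2 (-y) * f b)
        = - ∫ b : ℝ, b * (gauss b σ2 y * f b) := by
      rw [← integral_neg_eq_self (fun b => b * (gauss b σ2 (-y) * f b)) volume]
      have : ∀ b : ℝ, (-b) * (gauss (-b) σ2 (-y) * f (-b))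
          = -(b * (gauss b σ2 y * f b)) := by
        intro b; rw [hgauss_neg, hf_symm]; ring
      simp_rw [this]
      exact integral_neg _
    have hD : ∫ b : ℝ, gauss b σ2 (-y) * f b = ∫ b : ℝ, gauss b σ2 y * f b := by
      rw [← integral_neg_eq_self (fun b => gauss b σ2 (-y) * f b) volume]
      simp_rw [hgauss_neg, hf_symm]
    rw [hN, hD, neg_div]
  · -- inequality
    intro y hy
    unfold postMean
    rw [div_le_iff₀ (hD_pos y)]
    set h : ℝ → ℝ := fun b => (y - b) * (gauss b σ2 y * f b) with hh_def
    have hh_int : Integrable h := by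
      have := ((hD_int y).const_mul y).sub (hN_int y)
      apply this.congr
      filter_upwards with b
      simp only [Pi.sub_apply, hh_def]; ring
    have hh2_int : Integrable (fun b => h (2*y - b)) := by
      have := (hh_int.comp_neg).comp_add_right (-(2*y))
      simpa [show ∀ x:ℝ, -(x + -(2*y)) = 2*y - x from fun x => by ring] using this
    have hgauss_eq : ∀ b : ℝ, gauss (2*y - b) σ2 y = gauss b σ2 y := by
      intro b; unfold gauss; ring_nf
    have hfle : ∀ b : ℝ, b ≤ y → f (2*y - b) ≤ f b := by
      intro b hb
      have h2yb : (0:ℝ) ≤ 2*y - b := by linarith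
      have habs : |b| ≤ 2*y - b := by
        rcases le_total 0 b with h0 | h0
        · rw [abs_of_nonneg h0]; linarith
        · rw [abs_of_nonpos h0]; linarith
      have := hf_unimodal (Set.mem_Ici.mpr (abs_nonneg b)) (Set.mem_Ici.mpr h2yb) habs
      rcases le_total 0 b with h0 | h0
      · rwa [abs_of_nonneg h0] at this
      · rw [abs_of_nonpos h0, hf_symm] at this; exact this
    have hfge : ∀ b : ℝ, y ≤ b → f b ≤ f (2*y - b) := by
      intro b hb
      have hbpos : (0:ℝ) ≤ b := by linarith
      have habs : |2*y - b| ≤ b := by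
        rcases le_total 0 (2*y - b) with h0 | h0
        · rw [abs_of_nonneg h0]; linarith
        · rw [abs_of_nonpos h0]; linarith
      have := hf_unimodal (Set.mem_Ici.mpr (abs_nonneg _)) (Set.mem_Ici.mpr hbpos) habs
      rcases le_total 0 (2*y - b) with h0 | h0
      · rwa [abs_of_nonneg h0] at this
      · rw [abs_of_nonpos h0, hf_symm] at this; exact this
    have hsum : ∀ b : ℝ, 0 ≤ h b + h (2*y - b) := by
      intro b
      have hrw : h b + h (2*y - b) = (y - b) * (f b - f (2*y - b)) * gauss b σ2 y := by
        simp only [hh_def, hgauss_eq]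
        ring
      rw [hrw]
      apply mul_nonneg _ (gauss_pos hσ2 b y).le
      rcases le_total b y with hb | hb
      · exact mul_nonneg (by linarith) (by linarith [hfle b hb])
      · nlinarith [mul_nonneg (sub_nonneg.mpr hb) (sub_nonneg.mpr (hfge b hb))]
    have hint_eq : ∫ b : ℝ, h (2*y - b) = ∫ b : ℝ, h b := by
      rw [← (integral_neg_eq_self h volume)]
      simp_rw [show ∀ x:ℝ, 2*y - x = -(x + -(2*y)) from fun x => by ring]
      exact integral_add_right_eq_self (μ := volume) (fun x => h (-x)) (-(2*y))
    have hpos : 0 ≤ ∫ b : ℝ, h b := by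
      have h0 : 0 ≤ ∫ b : ℝ, (h b + h (2*y - b)) := integral_nonneg hsum
      rw [integral_add hh_int hh2_int, hint_eq] at h0
      linarith
    have hsplit : ∫ b : ℝ, h b
        = y * (∫ b : ℝ, gauss b σ2 y * f b) - ∫ b : ℝ, b * (gauss b σ2 y * f b) := by
      have : ∀ b : ℝ, h b = y * (gauss b σ2 y * f b) - b * (gauss b σ2 y * f b) := by
        intro b; simp only [hh_def]; ring
      simp_rw [this]
      rw [integral_sub ((hD_int y).const_mul y) (hN_int y), integral_const_mul]
    rw [hsplit] at hpos
    linarith
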